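/- Let G be a finite simple graph with n vertices, m edges and degree sequence d_1,…,d_n, and let α be a real number. Then the coefficient of x^{n-2} in the characteristic polynomial det(x·I_n − A_α(G)) equals 2α²m² − (1−α)²m − (1/2)α²·Σ_{r=1}^n d_r²; equivalently, c_{α2}(G) = 2α²m² − (1−α)²m − (1/2)α²Σ_r d_r². -/

import Mathlib

open Matrix Polynomial BigOperators

lemma aux_prod_coeff {ι : Type*} [DecidableEq ι] (s : Finset ι) (f : ι → ℝ) (hs : 2 ≤ s.card) :
    (∏ i ∈ s, (X - C (f i))).coeff (s.card - 2)
      = ((∑ i ∈ s, f i) ^ 2 - ∑ i ∈ s, (f i) ^ 2) / 2 := by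
  induction s using Finset.cons_induction with
  | empty => simp at hs
  | cons a s ha ih =>
    rw [Finset.card_cons] at hs ⊢
    have hs1 : 1 ≤ s.card := by omega
    rcases eq_or_lt_of_le hs1 with h1 | h2
    · obtain ⟨b, rfl⟩ := Finset.card_eq_one.mp h1.symm
      simp only [Finset.prod_cons, Finset.prod_singleton, Finset.sum_cons,
        Finset.sum_singleton, Finset.card_singleton]
      have : ((X - C (f a)) * (X - C (f b))).coeff 0 = f a * f b := by
        simp [coeff_zero_eq_eval_zero]
      simpa using this.trans (by ring)
    · have hs2 : 2 ≤ s.card := h2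
      obtain ⟨m, hm⟩ : ∃ m, s.card = m + 2 := ⟨s.card - 2, by omega⟩
      have hcard : s.card + 1 - 2 = m + 1 := by omega
      rw [hcard, Finset.prod_cons, Finset.sum_cons, Finset.sum_cons]
      have hsplit : ((X - C (f a)) * ∏ i ∈ s, (X - C (f i))).coeff (m + 1)
          = (∏ i ∈ s, (X - C (f i))).coeff m
            - f a * (∏ i ∈ s, (X - C (f i))).coeff (m + 1) := by
        rw [sub_mul, Polynomial.coeff_sub, Polynomial.coeff_X_mul, Polynomial.coeff_C_mul]
      have h1' : (∏ i ∈ s, (X - C (f i))).coeff m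
          = ((∑ i ∈ s, f i) ^ 2 - ∑ i ∈ s, (f i) ^ 2) / 2 := by
        have := ih hs2; rwa [hm, Nat.add_sub_cancel] at this
      have h2' : (∏ i ∈ s, (X - C (f i))).coeff (m + 1) = -∑ i ∈ s, f i := by
        have := Polynomial.prod_X_sub_C_coeff_card_pred s f (by omega)
        rwa [hm, show m + 2 - 1 = m + 1 from rfl] at this
      rw [hsplit, h1', h2']
      ring

lemma aux_charmatrix_diagonal {n : Type*} [Fintype n] [DecidableEq n] (d : n → ℝ) :
    charmatrix (Matrix.diagonal d) = Matrix.diagonal (fun i => (X : ℝ[X]) - C (d i)) := by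
  ext i j
  rcases eq_or_ne i j with rfl | h
  · simp
  · simp [charmatrix_apply_ne _ _ _ h, Matrix.diagonal_apply_ne _ h]

lemma aux_charpoly_hermitian {n : Type*} [Fintype n] [DecidableEq n]
    {M : Matrix n n ℝ} (hM : M.IsHermitian) :
    M.charpoly = ∏ i, (X - C (hM.eigenvalues i)) := by
  set U : Matrix n n ℝ := (Matrix.IsHermitian.eigenvectorUnitary hM : Matrix n n ℝ) with hU
  have hUmem := (Matrix.IsHermitian.eigenvectorUnitary hM).2
  have hsU : star U * U = 1 := Matrix.mem_unitaryGroup_iff'.mp hUmem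
  have hdiag : star U * M * U = Matrix.diagonal hM.eigenvalues := by
    have := hM.conjStarAlgAut_star_eigenvectorUnitary
    simpa [hU, RCLike.ofReal_real_eq_id] using this
  have hmapone : (1 : Matrix n n ℝ).map (C : ℝ → ℝ[X]) = 1 :=
    Matrix.map_one _ (map_zero C) (map_one C)
  have hmap : ((star U * M * U).map (C : ℝ → ℝ[X]))
      = (star U).map C * M.map C * U.map C := by
    rw [Matrix.map_mul, Matrix.map_mul]
  have hscalar : (star U).map (C : ℝ → ℝ[X]) * Matrix.scalar n (X : ℝ[X]) * U.map C
      = Matrix.scalar n (X : ℝ[X]) := by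
    rw [(Matrix.scalar_commute (X : ℝ[X]) (fun r => Commute.all _ _)
      ((star U).map C)).symm.eq]
    rw [mul_assoc, ← Matrix.map_mul, hsU, hmapone, mul_one]
  have key : charmatrix (Matrix.diagonal hM.eigenvalues)
      = (star U).map C * charmatrix M * U.map C := by
    rw [← hdiag]
    unfold charmatrix
    rw [RingHom.mapMatrix_apply, RingHom.mapMatrix_apply]
    symm
    rw [Matrix.mul_sub, Matrix.sub_mul, hscalar, ← hmap]
  have hdet : M.charpoly = (charmatrix (Matrix.diagonal hM.eigenvalues)).det := by
    rw [key, Matrix.det_mul, Matrix.det_mul]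
    have h1 : ((star U).map (C : ℝ → ℝ[X])).det * (U.map C).det = 1 := by
      rw [← Matrix.det_mul, ← Matrix.map_mul, hsU, hmapone, Matrix.det_one]
    calc M.charpoly = ((star U).map C).det * (U.map C).det * (charmatrix M).det := by
              rw [h1, one_mul]; rfl
      _ = ((star U).map C).det * (charmatrix M).det * (U.map C).det := by ring
  rw [hdet, aux_charmatrix_diagonal, Matrix.det_diagonal]

/-- For a finite simple graph `G` with `n ≥ 2` vertices, `m` edges and degree
sequence `(d_v)`, and a real number `α`, the coefficient of `x^(n-2)` in
`det(x·I − A_α(G))`, where `A_α(G) = α·D(G) + (1−α)·A(G)`, equals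
`2α²m² − (1−α)²m − (1/2)α²·Σ_v d_v²`. -/
theorem coeff_two_Aalpha_charpoly {V : Type*} [Fintype V] [DecidableEq V]
    (G : SimpleGraph V) [DecidableRel G.Adj] (α : ℝ)
    (hn : 2 ≤ Fintype.card V) :
    (Matrix.charpoly
        (α • Matrix.diagonal (fun v => (G.degree v : ℝ)) + (1 - α) • G.adjMatrix ℝ)).coeff
      (Fintype.card V - 2)
      = 2 * α ^ 2 * (G.edgeFinset.card : ℝ) ^ 2 - (1 - α) ^ 2 * (G.edgeFinset.card : ℝ)
        - (1 / 2) * α ^ 2 * ∑ v, (G.degree v : ℝ) ^ 2 := by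
  classical
  have hne : Nonempty V := Fintype.card_pos_iff.mp (by omega)
  set M : Matrix V V ℝ :=
    α • Matrix.diagonal (fun v => (G.degree v : ℝ)) + (1 - α) • G.adjMatrix ℝ with hMdef
  have hsymm : M.IsHermitian := by
    rw [Matrix.IsHermitian, Matrix.conjTranspose_eq_transpose_of_trivial, hMdef,
      Matrix.transpose_add, Matrix.transpose_smul, Matrix.transpose_smul,
      Matrix.diagonal_transpose, SimpleGraph.transpose_adjMatrix]
  have hchar := aux_charpoly_hermitian hsymm
  have hcoeff := aux_prod_coeff Finset.univ hsymm.eigenvalues (by simpa using hn)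
  rw [Finset.card_univ] at hcoeff
  rw [hchar, hcoeff]
  -- setup unitary for traces
  set U : Matrix V V ℝ := (Matrix.IsHermitian.eigenvectorUnitary hsymm : Matrix V V ℝ) with hU
  have hUmem := (Matrix.IsHermitian.eigenvectorUnitary hsymm).2
  have hUs : U * star U = 1 := Matrix.mem_unitaryGroup_iff.mp hUmem
  have hdiag : star U * M * U = Matrix.diagonal hsymm.eigenvalues := by
    have := hsymm.conjStarAlgAut_star_eigenvectorUnitary
    simpa [hU, RCLike.ofReal_real_eq_id] using this
  have htrace : ∑ i, hsymm.eigenvalues i = M.trace := by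
    rw [Matrix.trace_eq_neg_charpoly_coeff, hchar]
    have h := Polynomial.prod_X_sub_C_coeff_card_pred Finset.univ hsymm.eigenvalues
      (by simp [Finset.card_univ]; omega)
    rw [Finset.card_univ] at h
    rw [h]; simp
  have htrace2 : ∑ i, hsymm.eigenvalues i ^ 2 = (M * M).trace := by
    have hmm : (star U * M * U) * (star U * M * U) = star U * (M * M) * U := by
      simp only [mul_assoc]
      rw [← mul_assoc U (star U) (M * U), hUs, one_mul]
    calc ∑ i, hsymm.eigenvalues i ^ 2
        = (Matrix.diagonal hsymm.eigenvalues * Matrix.diagonal hsymm.eigenvalues).trace := by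
          rw [Matrix.diagonal_mul_diagonal, Matrix.trace_diagonal]
          simp [sq]
      _ = (star U * (M * M) * U).trace := by rw [← hdiag, hmm]
      _ = (U * (star U) * (M * M)).trace := by rw [Matrix.trace_mul_cycle]
      _ = (M * M).trace := by rw [hUs, one_mul]
  have hMtrace : M.trace = α * (2 * (G.edgeFinset.card : ℝ)) := by
    have h1 : M.trace = ∑ i, α * (G.degree i : ℝ) := by
      simp [hMdef, Matrix.trace, Matrix.diag, Matrix.add_apply, Matrix.smul_apply]
    rw [h1, ← Finset.mul_sum]
    congr 1
    have := G.sum_degrees_eq_twice_card_edges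
    calc (∑ i, (G.degree i : ℝ)) = ((∑ i, G.degree i : ℕ) : ℝ) := by push_cast; rfl
      _ = 2 * (G.edgeFinset.card : ℝ) := by rw [this]; push_cast; ring
  have hrow : ∀ i, (∑ j, (if G.Adj i j then (1:ℝ) else 0)) = (G.degree i : ℝ) := by
    intro i
    rw [Finset.sum_boole, SimpleGraph.degree, SimpleGraph.neighborFinset_eq_filter]
  have hpt : ∀ i j, M i j * M j i
      = α ^ 2 * (if i = j then (G.degree i : ℝ) ^ 2 else 0)
        + (1 - α) ^ 2 * (if G.Adj i j then (1:ℝ) else 0) := by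
    intro i j
    rcases eq_or_ne i j with rfl | h
    · simp [hMdef, Matrix.add_apply, Matrix.smul_apply]; ring
    · have hji : G.Adj j i ↔ G.Adj i j := G.adj_comm j i
      simp only [hMdef, Matrix.add_apply, Matrix.smul_apply, Matrix.diagonal_apply_ne _ h,
        Matrix.diagonal_apply_ne _ (Ne.symm h), SimpleGraph.adjMatrix_apply, if_neg h,
        smul_eq_mul, mul_zero, zero_add]
      by_cases hadj : G.Adj i j
      · simp [hadj, hji.mpr hadj]; ring
      · simp [hadj, fun hc => hadj (hji.mp hc)]
  have hA : ∑ i, ∑ j, (if G.Adj i j then (1:ℝ) else 0) = 2 * (G.edgeFinset.card : ℝ) := by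
    have := G.sum_degrees_eq_twice_card_edges
    calc ∑ i, ∑ j, (if G.Adj i j then (1:ℝ) else 0) = ∑ i, (G.degree i : ℝ) :=
          Finset.sum_congr rfl (fun i _ => hrow i)
      _ = ((∑ i, G.degree i : ℕ) : ℝ) := by push_cast; rfl
      _ = 2 * (G.edgeFinset.card : ℝ) := by rw [this]; push_cast; ring
  have hD2 : ∑ i, ∑ j, (if i = j then (G.degree i : ℝ) ^ 2 else 0)
      = ∑ v, (G.degree v : ℝ) ^ 2 := by
    refine Finset.sum_congr rfl (fun i _ => ?_)
    simp
  have hM2trace : (M * M).trace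
      = α ^ 2 * (∑ v, (G.degree v : ℝ) ^ 2)
        + (1 - α) ^ 2 * (2 * (G.edgeFinset.card : ℝ)) := by
    calc (M * M).trace = ∑ i, ∑ j, M i j * M j i := by
          simp [Matrix.trace, Matrix.diag, Matrix.mul_apply]
      _ = ∑ i, ∑ j, (α ^ 2 * (if i = j then (G.degree i : ℝ) ^ 2 else 0)
            + (1 - α) ^ 2 * (if G.Adj i j then (1:ℝ) else 0)) := by
          simp only [hpt]
      _ = α ^ 2 * (∑ i, ∑ j, (if i = j then (G.degree i : ℝ) ^ 2 else 0))
            + (1 - α) ^ 2 * (∑ i, ∑ j, (if G.Adj i j then (1:ℝ) else 0)) := by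
          simp only [Finset.sum_add_distrib, Finset.mul_sum]
      _ = _ := by rw [hD2, hA]
  rw [htrace, htrace2, hMtrace, hM2trace]
  ring
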